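/- Let g > 0, h ≥ 0 and u ∈ ℝ, and define the one-dimensional kinetic Maxwellian M(ξ) := (1/(gπ)) · √( max(0, 2gh − (ξ − u)²) ) for ξ ∈ ℝ. Then ∫_ℝ M(ξ) dξ = h, ∫_ℝ ξ M(ξ) dξ = h u, and ∫_ℝ ξ² M(ξ) dξ = h u² + g h²/2. -/

import Mathlib

open MeasureTheory Real intervalIntegral

theorem sqrt_max0 (t : ℝ) : Real.sqrt (max 0 t) = Real.sqrt t := by
  rcases le_total t 0 with h | h
  · rw [max_eq_left h, Real.sqrt_zero, eq_comm, Real.sqrt_eq_zero']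
    exact h
  · rw [max_eq_right h]

theorem int_sq_sqrt : ∫ x in (-1:ℝ)..1, x ^ 2 * √(1 - x ^ 2) = π / 8 :=
  calc
    _ = ∫ x in sin (-(π / 2)).. sin (π / 2), x ^ 2 * √(1 - x ^ 2 : ℝ) := by
          rw [sin_neg, sin_pi_div_two]
    _ = ∫ x in (-(π / 2))..(π / 2), sin x ^ 2 * √(1 - sin x ^ 2 : ℝ) * cos x :=
          (integral_comp_mul_deriv (fun x _ => hasDerivAt_sin x) continuousOn_cos
            (by fun_prop)).symm
    _ = ∫ x in (-(π / 2))..(π / 2), sin x ^ 2 * cos x ^ 2 := by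
          refine integral_congr_ae (MeasureTheory.ae_of_all _ fun _ h => ?_)
          rw [Set.uIoc_of_le (neg_le_self (le_of_lt (half_pos Real.pi_pos))), Set.mem_Ioc] at h
          rw [← Real.cos_eq_sqrt_one_sub_sin_sq (le_of_lt h.1) h.2]
          ring
    _ = π / 8 := by
          rw [integral_sin_sq_mul_cos_sq, show (4:ℝ)*(π/2) = 2*π by ring,
            show (4:ℝ)*(-(π/2)) = -(2*π) by ring, Real.sin_neg, Real.sin_two_pi]
          ring

theorem supp_lemma (a : ℝ) (ha : 0 ≤ a) (P : ℝ → ℝ) :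
    (∫ x : ℝ, P x * √(a ^ 2 - x ^ 2)) = ∫ x in (-a)..a, P x * √(a ^ 2 - x ^ 2) := by
  have hzero : ∀ x ∉ Set.Icc (-a) a, P x * √(a ^ 2 - x ^ 2) = 0 := by
    intro x hx
    have hx' : x < -a ∨ a < x := by
      by_contra hc
      push_neg at hc
      exact hx ⟨hc.1, hc.2⟩
    have hneg : a ^ 2 - x ^ 2 ≤ 0 := by
      rcases hx' with h1 | h1 <;> nlinarith
    rw [Real.sqrt_eq_zero'.mpr hneg, mul_zero]
  have hind : (fun x => P x * √(a ^ 2 - x ^ 2)) =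
      Set.indicator (Set.Icc (-a) a) (fun x => P x * √(a ^ 2 - x ^ 2)) := by
    funext x
    by_cases hx : x ∈ Set.Icc (-a) a
    · rw [Set.indicator_of_mem hx]
    · rw [Set.indicator_of_notMem hx, hzero x hx]
  conv_lhs => rw [hind]
  rw [MeasureTheory.integral_indicator measurableSet_Icc,
    MeasureTheory.integral_Icc_eq_integral_Ioc,
    ← intervalIntegral.integral_of_le (by linarith : -a ≤ a)]

theorem base0 : ∫ x : ℝ, √(1 - x ^ 2) = π / 2 := by
  have := supp_lemma 1 zero_le_one (fun _ => 1)
  simp only [one_mul, one_pow] at this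
  rw [this, integral_sqrt_one_sub_sq]

theorem base2 : ∫ x : ℝ, x ^ 2 * √(1 - x ^ 2) = π / 8 := by
  have := supp_lemma 1 zero_le_one (fun x => x ^ 2)
  simp only [one_pow] at this
  rw [this, int_sq_sqrt]

theorem momA (a : ℝ) (ha : 0 < a) : ∫ x : ℝ, √(a ^ 2 - x ^ 2) = π * a ^ 2 / 2 := by
  have key : ∀ x : ℝ, √(a ^ 2 - x ^ 2) = a * √(1 - (a⁻¹ * x) ^ 2) := by
    intro x
    rw [show a ^ 2 - x ^ 2 = a ^ 2 * (1 - (a⁻¹ * x) ^ 2) by field_simp,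
      Real.sqrt_mul (sq_nonneg a), Real.sqrt_sq ha.le]
  simp_rw [key]
  rw [MeasureTheory.integral_const_mul,
    MeasureTheory.Measure.integral_comp_inv_mul_left (fun y => √(1 - y ^ 2)) a, base0,
    smul_eq_mul, abs_of_pos ha]
  ring

theorem momB (a : ℝ) : ∫ x : ℝ, x * √(a ^ 2 - x ^ 2) = 0 := by
  have h2 := MeasureTheory.integral_neg_eq_self (fun x : ℝ => x * √(a ^ 2 - x ^ 2)) volume
  simp only [neg_sq, neg_mul] at h2
  rw [MeasureTheory.integral_neg] at h2
  linarith

theorem momC (a : ℝ) (ha : 0 < a) :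
    ∫ x : ℝ, x ^ 2 * √(a ^ 2 - x ^ 2) = π * a ^ 4 / 8 := by
  have key : ∀ x : ℝ, x ^ 2 * √(a ^ 2 - x ^ 2)
      = a ^ 3 * ((a⁻¹ * x) ^ 2 * √(1 - (a⁻¹ * x) ^ 2)) := by
    intro x
    rw [show a ^ 2 - x ^ 2 = a ^ 2 * (1 - (a⁻¹ * x) ^ 2) by field_simp,
      Real.sqrt_mul (sq_nonneg a), Real.sqrt_sq ha.le]
    field_simp
  simp_rw [key]
  rw [MeasureTheory.integral_const_mul,
    MeasureTheory.Measure.integral_comp_inv_mul_left (fun y => y ^ 2 * √(1 - y ^ 2)) a, base2,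
    smul_eq_mul, abs_of_pos ha]
  ring

theorem integ_lemma (a : ℝ) (ha : 0 ≤ a) (P : ℝ → ℝ) (hP : Continuous P) :
    Integrable (fun x : ℝ => P x * √(a ^ 2 - x ^ 2)) := by
  apply Continuous.integrable_of_hasCompactSupport
  · fun_prop
  · apply HasCompactSupport.intro (isCompact_Icc (a := -a) (b := a))
    intro x hx
    have hx' : x < -a ∨ a < x := by
      by_contra hc
      push_neg at hc
      exact hx ⟨hc.1, hc.2⟩
    have hneg : a ^ 2 - x ^ 2 ≤ 0 := by
      rcases hx' with h1 | h1 <;> nlinarith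
    rw [Real.sqrt_eq_zero'.mpr hneg, mul_zero]

theorem stmt4 (g h u : ℝ) (hg : 0 < g) (hh : 0 ≤ h)
    (M : ℝ → ℝ)
    (hM : ∀ ξ, M ξ = (1 / (g * Real.pi)) * Real.sqrt (max 0 (2 * g * h - (ξ - u) ^ 2))) :
    (∫ ξ : ℝ, M ξ) = h ∧
    (∫ ξ : ℝ, ξ * M ξ) = h * u ∧
    (∫ ξ : ℝ, ξ ^ 2 * M ξ) = h * u ^ 2 + g * h ^ 2 / 2 := by
  have hpi : (0:ℝ) < π := Real.pi_pos
  rcases eq_or_lt_of_le hh with h0 | hpos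
  · -- h = 0
    have hM0 : ∀ ξ, M ξ = 0 := by
      intro ξ
      rw [hM, ← h0]
      rw [max_eq_left (by nlinarith [sq_nonneg (ξ - u)] : 2 * g * 0 - (ξ - u) ^ 2 ≤ 0)]
      simp
    refine ⟨?_, ?_, ?_⟩ <;> simp [hM0, ← h0]
  · -- h > 0
    set c : ℝ := 1 / (g * π) with hc
    set a : ℝ := Real.sqrt (2 * g * h) with hadef
    have ha : 0 < a := Real.sqrt_pos.mpr (by positivity)
    have ha2 : a ^ 2 = 2 * g * h := Real.sq_sqrt (by positivity)
    have hM' : ∀ ξ, M ξ = c * √(a ^ 2 - (ξ - u) ^ 2) := by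
      intro ξ; rw [hM, sqrt_max0, ha2]
    -- integrability helpers
    have int1 : Integrable (fun x : ℝ => (c * x) * √(a ^ 2 - x ^ 2)) :=
      integ_lemma a ha.le _ (by fun_prop)
    have int0 : Integrable (fun x : ℝ => (c * u) * √(a ^ 2 - x ^ 2)) :=
      integ_lemma a ha.le _ (by fun_prop)
    have int2 : Integrable (fun x : ℝ => (c * x ^ 2) * √(a ^ 2 - x ^ 2)) :=
      integ_lemma a ha.le _ (by fun_prop)
    have int1u : Integrable (fun x : ℝ => (2 * u * c * x) * √(a ^ 2 - x ^ 2)) :=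
      integ_lemma a ha.le _ (by fun_prop)
    have int0u : Integrable (fun x : ℝ => (c * u ^ 2) * √(a ^ 2 - x ^ 2)) :=
      integ_lemma a ha.le _ (by fun_prop)
    have hA := momA a ha
    have hB := momB a
    have hC := momC a ha
    refine ⟨?_, ?_, ?_⟩
    · calc (∫ ξ : ℝ, M ξ) = ∫ ξ : ℝ, (fun x => c * √(a ^ 2 - x ^ 2)) (ξ - u) := by
            simp_rw [hM']
        _ = ∫ x : ℝ, c * √(a ^ 2 - x ^ 2) :=
            MeasureTheory.integral_sub_right_eq_self (μ := volume)
              (fun x => c * √(a ^ 2 - x ^ 2)) u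
        _ = c * (π * a ^ 2 / 2) := by rw [MeasureTheory.integral_const_mul, hA]
        _ = h := by rw [hc, ha2]; field_simp
    · calc (∫ ξ : ℝ, ξ * M ξ)
          = ∫ ξ : ℝ, (fun x => (c * x) * √(a ^ 2 - x ^ 2)
              + (c * u) * √(a ^ 2 - x ^ 2)) (ξ - u) := by
            refine MeasureTheory.integral_congr_ae (MeasureTheory.ae_of_all _ fun ξ => ?_)
            simp only [hM']
            ring
        _ = ∫ x : ℝ, ((c * x) * √(a ^ 2 - x ^ 2) + (c * u) * √(a ^ 2 - x ^ 2)) :=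
            MeasureTheory.integral_sub_right_eq_self (μ := volume)
              (fun x => (c * x) * √(a ^ 2 - x ^ 2) + (c * u) * √(a ^ 2 - x ^ 2)) u
        _ = (∫ x : ℝ, (c * x) * √(a ^ 2 - x ^ 2)) + ∫ x : ℝ, (c * u) * √(a ^ 2 - x ^ 2) :=
            MeasureTheory.integral_add int1 int0
        _ = c * (∫ x : ℝ, x * √(a ^ 2 - x ^ 2)) + (c * u) * ∫ x : ℝ, √(a ^ 2 - x ^ 2) := by
            simp_rw [mul_assoc, MeasureTheory.integral_const_mul]
        _ = h * u := by rw [hA, hB, hc, ha2]; field_simp; ring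
    · calc (∫ ξ : ℝ, ξ ^ 2 * M ξ)
          = ∫ ξ : ℝ, (fun x => (c * x ^ 2) * √(a ^ 2 - x ^ 2)
              + ((2 * u * c * x) * √(a ^ 2 - x ^ 2) + (c * u ^ 2) * √(a ^ 2 - x ^ 2))) (ξ - u) := by
            refine MeasureTheory.integral_congr_ae (MeasureTheory.ae_of_all _ fun ξ => ?_)
            simp only [hM']
            ring
        _ = ∫ x : ℝ, ((c * x ^ 2) * √(a ^ 2 - x ^ 2)
              + ((2 * u * c * x) * √(a ^ 2 - x ^ 2) + (c * u ^ 2) * √(a ^ 2 - x ^ 2))) :=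
            MeasureTheory.integral_sub_right_eq_self (μ := volume)
              (fun x => (c * x ^ 2) * √(a ^ 2 - x ^ 2)
                + ((2 * u * c * x) * √(a ^ 2 - x ^ 2) + (c * u ^ 2) * √(a ^ 2 - x ^ 2))) u
        _ = (∫ x : ℝ, (c * x ^ 2) * √(a ^ 2 - x ^ 2))
              + ((∫ x : ℝ, (2 * u * c * x) * √(a ^ 2 - x ^ 2))
                + ∫ x : ℝ, (c * u ^ 2) * √(a ^ 2 - x ^ 2)) := by
            have int12 : Integrable (fun x : ℝ => (2 * u * c * x) * √(a ^ 2 - x ^ 2)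
                + (c * u ^ 2) * √(a ^ 2 - x ^ 2)) := int1u.add int0u
            rw [MeasureTheory.integral_add int2 int12,
              MeasureTheory.integral_add int1u int0u]
        _ = c * (∫ x : ℝ, x ^ 2 * √(a ^ 2 - x ^ 2))
              + ((2 * u * c) * (∫ x : ℝ, x * √(a ^ 2 - x ^ 2))
                + (c * u ^ 2) * ∫ x : ℝ, √(a ^ 2 - x ^ 2)) := by
            simp_rw [mul_assoc, MeasureTheory.integral_const_mul]
        _ = h * u ^ 2 + g * h ^ 2 / 2 := by
            rw [hA, hB, hC, hc, show a ^ 4 = (a ^ 2) ^ 2 by ring, ha2]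
            field_simp
            ring
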